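/- Let S be a Noetherian standard graded algebra over a local ring, Ĩ a graded ideal of S, and t an element of the base local ring's maximal ideal that is a non-zerodivisor modulo Ĩ, with A = S/Ĩ and Ā = A/tA. For d linear forms t_1,...,t_d of A with images t̄_1,...,t̄_d in Ā and ideals Q = (t_1,...,t_d), Q̄ = (t̄_1,...,t̄_d): Q is a reduction of A (Q_n = A_n for n ≫ 0) if and only if Q̄ is a reduction of Ā, and in that case r_Q(A) = r_{Q̄}(Ā). Consequently r(S/Ĩ) = r(R/in_λ(I)) in the setup S = R ⊗_k k[t]_{(t)}, Ā ≅ R/in_λ(I). -/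

import Mathlib

set_option synthInstance.maxHeartbeats 1000000
set_option maxHeartbeats 1000000

open MvPolynomial

/-- The degree-`n` graded component of the standard graded algebra `S/J` over the
(local) base ring `B`. -/
noncomputable def gpieceB (B : Type*) [CommRing B] (m : ℕ)
    (J : Ideal (MvPolynomial (Fin m) B)) (n : ℕ) :
    Submodule B (MvPolynomial (Fin m) B ⧸ J) :=
  (homogeneousSubmodule (Fin m) B n).map (Ideal.Quotient.mkₐ B J).toLinearMap

/-- `Q_n = A_n`. -/
def gfullB {B : Type*} [CommRing B] {m : ℕ} (J : Ideal (MvPolynomial (Fin m) B))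
    (Q : Ideal (MvPolynomial (Fin m) B ⧸ J)) (n : ℕ) : Prop :=
  gpieceB B m J n ≤ Q.restrictScalars B

/-- The reduction number `r_Q = min{n : Q_{n+1} = A_{n+1}}`. -/
noncomputable def redNumB {B : Type*} [CommRing B] {m : ℕ}
    (J : Ideal (MvPolynomial (Fin m) B))
    (Q : Ideal (MvPolynomial (Fin m) B ⧸ J)) : ℕ :=
  sInf {n : ℕ | gfullB J Q (n + 1)}

/-- The reduction number `r(S/J)`: the minimum of `r_Q` over the (minimal) reductions
`Q` generated by `d` linear forms. -/
noncomputable def rAlgB (B : Type*) [CommRing B] (m d : ℕ)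
    (J : Ideal (MvPolynomial (Fin m) B)) : ℕ :=
  sInf {r : ℕ | ∃ (y : Fin d → MvPolynomial (Fin m) B)
      (Q : Ideal (MvPolynomial (Fin m) B ⧸ J)),
    (∀ i, y i ∈ homogeneousSubmodule (Fin m) B 1) ∧
    Q = Ideal.span (Set.range fun i => Ideal.Quotient.mk J (y i)) ∧
    (∃ N : ℕ, ∀ n ≥ N, gfullB J Q n) ∧ redNumB J Q = r}

section Aux

variable {B : Type*} [CommRing B] {m : ℕ}

attribute [local instance] MvPolynomial.gradedAlgebra

lemma auxDecompose (f : MvPolynomial (Fin m) B) (n : ℕ) :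
    ((DirectSum.decompose (homogeneousSubmodule (Fin m) B) f n : _) :
      MvPolynomial (Fin m) B) = homogeneousComponent n f :=
  MvPolynomial.decomposition.decompose'_apply f n

/-- The sup of a graded ideal with an ideal generated by linear forms is
componentwise closed. -/
lemma auxCompMem {It : Ideal (MvPolynomial (Fin m) B)}
    (hIt : ∀ f ∈ It, ∀ n : ℕ, homogeneousComponent n f ∈ It)
    {d : ℕ} {y : Fin d → MvPolynomial (Fin m) B}
    (hy : ∀ i, y i ∈ homogeneousSubmodule (Fin m) B 1) :
    ∀ f ∈ Ideal.span (Set.range y) ⊔ It, ∀ n : ℕ,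
      homogeneousComponent n f ∈ Ideal.span (Set.range y) ⊔ It := by
  have h1 : (Ideal.span (Set.range y)).IsHomogeneous (homogeneousSubmodule (Fin m) B) :=
    Ideal.homogeneous_span _ _ (by rintro x ⟨i, rfl⟩; exact ⟨1, hy i⟩)
  have h2 : It.IsHomogeneous (homogeneousSubmodule (Fin m) B) := by
    intro i r hr
    rw [auxDecompose]
    exact hIt r hr i
  have h3 := h1.sup h2
  intro f hf n
  have := h3 n hf
  rwa [auxDecompose] at this

lemma auxFinDeg (m n : ℕ) : {d : Fin m →₀ ℕ | d.degree = n}.Finite := by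
  have h : {d : Fin m →₀ ℕ | d.degree = n} ⊆
      Finsupp.equivFunOnFinite.symm '' (Set.univ.pi fun _ : Fin m => Set.Iic n) := by
    intro d hd
    refine ⟨Finsupp.equivFunOnFinite d, fun i _ => ?_, by simp⟩
    simpa using hd ▸ Finsupp.le_degree i d
  exact ((Set.Finite.pi fun _ => Set.finite_Iic n).image _).subset h

lemma auxFG (B : Type*) [CommRing B] (m n : ℕ) :
    (homogeneousSubmodule (Fin m) B n).FG := by
  rw [homogeneousSubmodule_eq_finsupp_supported, AddMonoidAlgebra.supported_eq_span_single]
  exact Submodule.fg_span ((auxFinDeg m n).image _)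

/-- The Nakayama step: if every homogeneous `f` of degree `n` lies in
`J + (t)` with `t` in the maximal ideal and `J` componentwise closed,
then every such `f` already lies in `J`. -/
lemma auxNak [IsLocalRing B] {t : B} (ht : t ∈ IsLocalRing.maximalIdeal B)
    {J : Ideal (MvPolynomial (Fin m) B)}
    (hJ : ∀ f ∈ J, ∀ n : ℕ, homogeneousComponent n f ∈ J) (n : ℕ)
    (H : ∀ f ∈ homogeneousSubmodule (Fin m) B n, f ∈ J ⊔ Ideal.span {C t}) :
    ∀ f ∈ homogeneousSubmodule (Fin m) B n, f ∈ J := by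
  set P := homogeneousSubmodule (Fin m) B n with hP
  set JB := J.restrictScalars B with hJB
  set P' := P.map JB.mkQ with hP'
  have key : P' ≤ (IsLocalRing.maximalIdeal B) • P' := by
    rintro x hx
    obtain ⟨f, hf, rfl⟩ := hx
    obtain ⟨a, ha, b, hb, hab⟩ := Submodule.mem_sup.mp (H f hf)
    obtain ⟨g, rfl⟩ := Ideal.mem_span_singleton'.mp hb
    have hfc : f = homogeneousComponent n a + t • homogeneousComponent n g := by
      have h1 : homogeneousComponent n f = f := by
        rw [homogeneousComponent_of_mem hf, if_pos rfl]
      calc f = homogeneousComponent n (a + g * C t) := by rw [hab, h1]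
        _ = homogeneousComponent n a + t • homogeneousComponent n g := by
            rw [map_add]
            congr 1
            rw [show g * C t = t • g by rw [smul_eq_C_mul]; ring, map_smul]
    have hmk : JB.mkQ f = t • JB.mkQ (homogeneousComponent n g) := by
      rw [hfc, map_add, map_smul]
      have : JB.mkQ (homogeneousComponent n a) = 0 := by
        rw [Submodule.mkQ_apply, Submodule.Quotient.mk_eq_zero]
        exact hJ a ha n
      rw [this, zero_add]
    rw [hmk]
    exact Submodule.smul_mem_smul ht ⟨_, homogeneousComponent_mem n g, rfl⟩
  have hbot : P' = ⊥ :=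
    Submodule.eq_bot_of_le_smul_of_le_jacobson_bot _ _ ((auxFG B m n).map _) key
      (by rw [IsLocalRing.jacobson_eq_maximalIdeal ⊥ bot_ne_top])
  intro f hf
  have hmem : JB.mkQ f ∈ P' := ⟨f, hf, rfl⟩
  rw [hbot, Submodule.mem_bot, Submodule.mkQ_apply, Submodule.Quotient.mk_eq_zero] at hmem
  exact hmem

/-- Unfolding membership in `gfullB`. -/
lemma auxGfull {J : Ideal (MvPolynomial (Fin m) B)} {d : ℕ}
    {y : Fin d → MvPolynomial (Fin m) B}
    {Q : Ideal (MvPolynomial (Fin m) B ⧸ J)}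
    (hQ : Q = Ideal.span (Set.range fun i => Ideal.Quotient.mk J (y i))) (n : ℕ) :
    gfullB J Q n ↔
      ∀ f ∈ homogeneousSubmodule (Fin m) B n, f ∈ Ideal.span (Set.range y) ⊔ J := by
  have hmap : Q = (Ideal.span (Set.range y)).map (Ideal.Quotient.mk J) := by
    rw [hQ, Ideal.map_span, ← Set.range_comp]; rfl
  constructor
  · intro h f hf
    have : Ideal.Quotient.mk J f ∈ Q := h ⟨f, hf, rfl⟩
    rwa [hmap, Ideal.mem_quotient_iff_mem_sup] at this
  · rintro h x ⟨f, hf, rfl⟩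
    show Ideal.Quotient.mk J f ∈ Q
    rw [hmap, Ideal.mem_quotient_iff_mem_sup]
    exact h f hf

/-- Pointwise equivalence of fullness for `Q` and `Q̄`. -/
lemma auxPoint [IsLocalRing B]
    {It : Ideal (MvPolynomial (Fin m) B)}
    (hIt : ∀ f ∈ It, ∀ n : ℕ, homogeneousComponent n f ∈ It)
    {t : B} (ht : t ∈ IsLocalRing.maximalIdeal B)
    {It' : Ideal (MvPolynomial (Fin m) B)}
    (hIt' : It' = It ⊔ Ideal.span {C t})
    {d : ℕ} {y : Fin d → MvPolynomial (Fin m) B}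
    (hy : ∀ i, y i ∈ homogeneousSubmodule (Fin m) B 1)
    {Q : Ideal (MvPolynomial (Fin m) B ⧸ It)}
    {Qbar : Ideal (MvPolynomial (Fin m) B ⧸ It')}
    (hQ : Q = Ideal.span (Set.range fun i => Ideal.Quotient.mk It (y i)))
    (hQbar : Qbar = Ideal.span (Set.range fun i => Ideal.Quotient.mk It' (y i)))
    (n : ℕ) :
    gfullB It Q n ↔ gfullB It' Qbar n := by
  rw [auxGfull hQ n, auxGfull hQbar n]
  have hsup : Ideal.span (Set.range y) ⊔ It' =
      (Ideal.span (Set.range y) ⊔ It) ⊔ Ideal.span {C t} := by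
    rw [hIt', sup_assoc]
  constructor
  · intro h f hf
    rw [hsup]
    exact Submodule.mem_sup_left (h f hf)
  · intro h
    exact auxNak ht (auxCompMem hIt hy) n (fun f hf => hsup ▸ h f hf)

end Aux

/-- let `S` be a Noetherian standard graded algebra over a local ring
`B`, `Ĩ` a graded ideal, `t ∈ 𝔪_B` a non-zerodivisor modulo `Ĩ`, `A = S/Ĩ` and
`Ā = A/tA = S/(Ĩ + (t))`.  For linear forms `t₁,...,t_d` generating `Q ⊆ A` with
images generating `Q̄ ⊆ Ā`:  `Q` is a reduction of `A` iff `Q̄` is a reduction of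
`Ā`, and in that case `r_Q(A) = r_{Q̄}(Ā)`; consequently `r(A) = r(Ā)`
(`= r(R/in_λ(I))` in the deformation setup, where `Ā ≅ R/in_λ(I)`). -/
theorem stmt11 (B : Type*) [CommRing B] [IsLocalRing B] [IsNoetherianRing B] (m : ℕ)
    (It : Ideal (MvPolynomial (Fin m) B))
    (hIt : ∀ f ∈ It, ∀ n : ℕ, homogeneousComponent n f ∈ It)
    (t : B) (ht : t ∈ IsLocalRing.maximalIdeal B)
    (hnzd : ∀ g : MvPolynomial (Fin m) B, C t * g ∈ It → g ∈ It)
    (It' : Ideal (MvPolynomial (Fin m) B))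
    (hIt' : It' = It ⊔ Ideal.span {C t}) :
    (∀ (d : ℕ) (y : Fin d → MvPolynomial (Fin m) B),
      (∀ i, y i ∈ homogeneousSubmodule (Fin m) B 1) →
      ∀ (Q : Ideal (MvPolynomial (Fin m) B ⧸ It))
        (Qbar : Ideal (MvPolynomial (Fin m) B ⧸ It')),
        Q = Ideal.span (Set.range fun i => Ideal.Quotient.mk It (y i)) →
        Qbar = Ideal.span (Set.range fun i => Ideal.Quotient.mk It' (y i)) →
        ((∃ N : ℕ, ∀ n ≥ N, gfullB It Q n) ↔ (∃ N : ℕ, ∀ n ≥ N, gfullB It' Qbar n)) ∧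
        ((∃ N : ℕ, ∀ n ≥ N, gfullB It Q n) → redNumB It Q = redNumB It' Qbar)) ∧
    (∀ d : ℕ, rAlgB B m d It = rAlgB B m d It') := by
  constructor
  · intro d y hy Q Qbar hQ hQbar
    have hpt := auxPoint hIt ht hIt' hy hQ hQbar
    constructor
    · exact ⟨fun ⟨N, hN⟩ => ⟨N, fun n hn => (hpt n).mp (hN n hn)⟩,
        fun ⟨N, hN⟩ => ⟨N, fun n hn => (hpt n).mpr (hN n hn)⟩⟩
    · intro _
      unfold redNumB
      congr 1
      ext n
      exact hpt (n + 1)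
  · intro d
    unfold rAlgB
    congr 1
    ext r
    constructor
    · rintro ⟨y, Q, hy, hQ, ⟨N, hN⟩, hnum⟩
      refine ⟨y, Ideal.span (Set.range fun i => Ideal.Quotient.mk It' (y i)), hy, rfl,
        ?_, ?_⟩
      · exact ⟨N, fun n hn => (auxPoint hIt ht hIt' hy hQ rfl n).mp (hN n hn)⟩
      · rw [← hnum]
        unfold redNumB
        congr 1
        ext n
        exact (auxPoint hIt ht hIt' hy hQ rfl (n + 1)).symm
    · rintro ⟨y, Qbar, hy, hQbar, ⟨N, hN⟩, hnum⟩
      refine ⟨y, Ideal.span (Set.range fun i => Ideal.Quotient.mk It (y i)), hy, rfl,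
        ?_, ?_⟩
      · exact ⟨N, fun n hn => (auxPoint hIt ht hIt' hy rfl hQbar n).mpr (hN n hn)⟩
      · rw [← hnum]
        unfold redNumB
        congr 1
        ext n
        exact auxPoint hIt ht hIt' hy rfl hQbar (n + 1)
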